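/- The Weyl group element W := exp(−(π/2)·h₅) · exp((π/2)·(e₄₅ + f₄₅)) equals −η (the matrix with rows (0,0,1),(0,−1,0),(1,0,0)), satisfies W² = I and W ∈ SU(2,1), and realizes the Weyl reflection s_{α₄+α₅}: W e₄ W⁻¹ = −f₄, W f₄ W⁻¹ = −e₄, W e₅ W⁻¹ = f₅, W f₅ W⁻¹ = e₅, W h₄ W⁻¹ = −h₄, and W h₅ W⁻¹ = h₅. -/

import Mathlib

open Matrix Complex

noncomputable section

/-- The signature-(2,1) metric `η`. -/
def η : Matrix (Fin 3) (Fin 3) ℂ := !![0,0,-1; 0,1,0; -1,0,0]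

/-- The real Lie algebra `su(2,1) = {X : tr X = 0 and ηX + X†η = 0}` (as a set of matrices,
with the matrix commutator as bracket). -/
def su21 : Set (Matrix (Fin 3) (Fin 3) ℂ) := {X | X.trace = 0 ∧ η * X + Xᴴ * η = 0}

def h4 : Matrix (Fin 3) (Fin 3) ℂ := !![1,0,0; 0,0,0; 0,0,-1]
def h5 : Matrix (Fin 3) (Fin 3) ℂ := !![I,0,0; 0,-2*I,0; 0,0,I]
def e4 : Matrix (Fin 3) (Fin 3) ℂ := !![0,1,0; 0,0,1; 0,0,0]
def e5 : Matrix (Fin 3) (Fin 3) ℂ := !![0,I,0; 0,0,-I; 0,0,0]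
def e45 : Matrix (Fin 3) (Fin 3) ℂ := !![0,0,I; 0,0,0; 0,0,0]
def f4 : Matrix (Fin 3) (Fin 3) ℂ := !![0,0,0; 1,0,0; 0,1,0]
def f5 : Matrix (Fin 3) (Fin 3) ℂ := !![0,0,0; I,0,0; 0,-I,0]
def f45 : Matrix (Fin 3) (Fin 3) ℂ := !![0,0,0; 0,0,0; I,0,0]
/-- The Weyl group element `W = exp(−(π/2) h₅) · exp((π/2)(e₄₅ + f₄₅))`. -/
def W : Matrix (Fin 3) (Fin 3) ℂ :=
  NormedSpace.exp ((-(Real.pi/2) : ℝ) • h5) *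
    NormedSpace.exp ((Real.pi/2 : ℝ) • (e45 + f45))

lemma exp1 : NormedSpace.exp ((-(Real.pi/2) : ℝ) • h5) = !![-I,0,0;0,-1,0;0,0,-I] := by
  have hd : ((-(Real.pi/2) : ℝ) • h5) =
      Matrix.diagonal ![(-(Real.pi/2) : ℝ)*I, (Real.pi : ℝ)*I, (-(Real.pi/2) : ℝ)*I] := by
    ext i j
    fin_cases i <;> fin_cases j <;>
      simp [h5, Matrix.diagonal, Matrix.smul_apply, Matrix.vecHead, Matrix.vecTail] <;>
      push_cast <;> ring
  have h1 : NormedSpace.exp (-((Real.pi : ℂ)/2 * I)) = -I := by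
    rw [show (-((Real.pi : ℂ)/2 * I)) = (((-(Real.pi/2)) : ℝ) : ℂ) * I by push_cast; ring,
      ← Complex.exp_eq_exp_ℂ, Complex.exp_mul_I, ← Complex.ofReal_cos, ← Complex.ofReal_sin]
    norm_num [Real.cos_pi_div_two, Real.sin_pi_div_two]
  have h2 : NormedSpace.exp (((Real.pi : ℝ)) * I : ℂ) = -1 := by
    rw [← Complex.exp_eq_exp_ℂ, Complex.exp_pi_mul_I]
  rw [hd, Matrix.exp_diagonal]
  ext i j
  fin_cases i <;> fin_cases j <;>
    simp [Matrix.diagonal, Matrix.vecHead, Matrix.vecTail, Pi.exp_def, h1, h2]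

def C : Matrix (Fin 3) (Fin 3) ℂ := !![1,0,1; 0,1,0; 1,0,-1]
def Cinv : Matrix (Fin 3) (Fin 3) ℂ := !![1/2,0,1/2; 0,1,0; 1/2,0,-1/2]

lemma hCC : C * Cinv = 1 := by
  ext i j
  fin_cases i <;> fin_cases j <;>
    simp [C, Cinv, Matrix.mul_apply, Fin.sum_univ_three, Matrix.one_apply] <;> norm_num

lemma hCinv : C⁻¹ = Cinv := Matrix.inv_eq_right_inv hCC

lemma exp2 : NormedSpace.exp ((Real.pi/2 : ℝ) • (e45 + f45)) = !![0,0,I;0,1,0;I,0,0] := by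
  have hconj : ((Real.pi/2 : ℝ) • (e45 + f45)) =
      C * Matrix.diagonal ![((Real.pi/2 : ℝ) : ℂ)*I, 0, (-(Real.pi/2) : ℝ)*I] * C⁻¹ := by
    rw [hCinv]
    ext i j
    fin_cases i <;> fin_cases j <;>
      simp [e45, f45, C, Cinv, Matrix.mul_apply, Fin.sum_univ_three, Matrix.diagonal,
        Matrix.vecHead, Matrix.vecTail, Matrix.smul_apply] <;> push_cast <;> ring
  rw [hconj, Matrix.exp_conj _ _ (Matrix.isUnit_iff_isUnit_det C |>.mpr (by
      simp [C, Matrix.det_fin_three]; norm_num)), Matrix.exp_diagonal, hCinv]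
  have h1 : NormedSpace.exp (((Real.pi/2 : ℝ) : ℂ) * I) = I := by
    rw [← Complex.exp_eq_exp_ℂ, Complex.exp_mul_I, ← Complex.ofReal_cos, ← Complex.ofReal_sin]
    norm_num [Real.cos_pi_div_two, Real.sin_pi_div_two]
  have h2 : NormedSpace.exp ((((-(Real.pi/2)) : ℝ)) * I : ℂ) = -I := by
    rw [← Complex.exp_eq_exp_ℂ, Complex.exp_mul_I, ← Complex.ofReal_cos, ← Complex.ofReal_sin]
    norm_num [Real.cos_pi_div_two, Real.sin_pi_div_two]
  have h0 : NormedSpace.exp (0 : ℂ) = 1 := by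
    rw [← Complex.exp_eq_exp_ℂ, Complex.exp_zero]
  have h1' : NormedSpace.exp ((Real.pi : ℂ) / 2 * I) = I := by
    rw [show ((Real.pi : ℂ) / 2 * I) = ((Real.pi/2 : ℝ) : ℂ) * I by push_cast; ring, h1]
  have h2' : NormedSpace.exp (-((Real.pi : ℂ) / 2 * I)) = -I := by
    rw [show (-((Real.pi : ℂ) / 2 * I)) = (((-(Real.pi/2)) : ℝ) : ℂ) * I by push_cast; ring, h2]
  ext i j
  fin_cases i <;> fin_cases j <;>
    (simp [C, Cinv, Matrix.mul_apply, Fin.sum_univ_three, Matrix.diagonal,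
      Matrix.vecHead, Matrix.vecTail, Pi.exp_def, h1, h2, h0]; try (rw [h1', h2']; ring))

lemma hW : W = !![0,0,1; 0,-1,0; 1,0,0] := by
  rw [W, exp1, exp2]
  ext i j
  fin_cases i <;> fin_cases j <;>
    simp [Matrix.mul_apply, Fin.sum_univ_three, Complex.I_mul_I, Matrix.vecHead, Matrix.vecTail]

lemma hWW : W * W = 1 := by
  rw [hW]
  ext i j
  fin_cases i <;> fin_cases j <;>
    simp [Matrix.mul_apply, Fin.sum_univ_three, Matrix.one_apply, Matrix.vecHead, Matrix.vecTail]

lemma hWinv : W⁻¹ = W := by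
  rw [Matrix.inv_eq_right_inv hWW]

set_option maxHeartbeats 2000000 in
/-- `W = −η`, `W² = 1`, `W ∈ SU(2,1)`, and `W` realizes the Weyl reflection
`s_{α₄+α₅}` on the generators. -/
theorem weyl_element_properties :
    W = -η ∧
    W = !![0,0,1; 0,-1,0; 1,0,0] ∧
    W * W = 1 ∧
    W.det = 1 ∧ Wᴴ * η * W = η ∧
    W * e4 * W⁻¹ = -f4 ∧
    W * f4 * W⁻¹ = -e4 ∧
    W * e5 * W⁻¹ = f5 ∧
    W * f5 * W⁻¹ = e5 ∧
    W * h4 * W⁻¹ = -h4 ∧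
    W * h5 * W⁻¹ = h5 := by
  refine ⟨?_, hW, hWW, ?_, ?_, ?_, ?_, ?_, ?_, ?_, ?_⟩
  · rw [hW]
    ext i j
    fin_cases i <;> fin_cases j <;> simp [η, Matrix.vecHead, Matrix.vecTail]
  · rw [hW, Matrix.det_fin_three]
    simp [Matrix.vecHead, Matrix.vecTail]
  · rw [hW]
    ext i j
    fin_cases i <;> fin_cases j <;>
      simp [η, Matrix.mul_apply, Fin.sum_univ_three, Matrix.conjTranspose_apply,
        Matrix.vecHead, Matrix.vecTail]
  all_goals
    rw [hWinv, hW]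
    ext i j
    fin_cases i <;> fin_cases j <;>
      simp [e4, e5, f4, f5, h4, h5, Matrix.mul_apply, Fin.sum_univ_three,
        Matrix.vecHead, Matrix.vecTail, Complex.I_mul_I] <;> ring
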